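/- Let X ∈ F not satisfy the first-order optimality condition (so that D(X) ≠ O and γ_max(X) > 0). Then for every α ∈ [0, ‖D(X)‖_F / γ_max(X)], the matrix X − α · D(X)/‖D(X)‖_F belongs to F, i.e. O ⪯ X − α D(X)/‖D(X)‖_F ⪯ I. -/

import Mathlib

set_option autoImplicit false

open Matrix Set Filter

attribute [local instance] Matrix.normedAddCommGroup Matrix.normedSpace

namespace BoxSDP

open scoped Classical

/-- Trace inner product `⟨A|B⟩ = Trace(Aᵀ B)`. -/
noncomputable def mip {m k : Type*} [Fintype m] [Fintype k]
    (A B : Matrix m k ℝ) : ℝ :=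
  (Aᵀ * B).trace

/-- Frobenius norm `‖A‖_F = √⟨A|A⟩`. -/
noncomputable def fnorm {m k : Type*} [Fintype m] [Fintype k]
    (A : Matrix m k ℝ) : ℝ :=
  Real.sqrt (mip A A)

/-- The feasible set `F = {X : O ⪯ X ⪯ I}` (membership forces symmetry). -/
def Feas (n : ℕ) : Set (Matrix (Fin n) (Fin n) ℝ) :=
  {X | X.PosSemidef ∧ (1 - X).PosSemidef}

/-- Square root of a positive semidefinite matrix (junk value `0` otherwise);
agrees with `A^{1/2} = Q K^{1/2} Qᵀ` on positive semidefinite matrices. -/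
noncomputable def psqrt {m : Type*} [Fintype m] [DecidableEq m]
    (A : Matrix m m ℝ) : Matrix m m ℝ :=
  if h : A.PosSemidef then
    h.1.eigenvectorUnitary.1 * Matrix.diagonal ((↑) ∘ Real.sqrt ∘ h.1.eigenvalues) *
      (star h.1.eigenvectorUnitary : Matrix m m ℝ) else 0

/-- Fourth root `A^{1/4}` of a positive semidefinite matrix. -/
noncomputable def proot4 {m : Type*} [Fintype m] [DecidableEq m]
    (A : Matrix m m ℝ) : Matrix m m ℝ :=
  psqrt (psqrt A)

/-- The 2-norm of a symmetric matrix: its largest absolute eigenvalue. -/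
noncomputable def norm2 {m : Type*} [Fintype m] [DecidableEq m]
    (A : Matrix m m ℝ) : ℝ :=
  if h : A.IsHermitian then sSup (Set.range fun i => |h.eigenvalues i|) else 0

/-- The linear functional `H ↦ ⟨G|H⟩`, as a continuous linear map; a function
`f` has gradient matrix `G` at `X` iff `HasFDerivAt f (gradCLM G) X`. -/
noncomputable def gradCLM {n : ℕ} (G : Matrix (Fin n) (Fin n) ℝ) :
    Matrix (Fin n) (Fin n) ℝ →L[ℝ] ℝ :=
  LinearMap.toContinuousLinearMap
    { toFun := fun H => mip G H
      map_add' := fun x y => by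
        simp [mip, Matrix.mul_add]
      map_smul' := fun c x => by
        simp [mip, Matrix.mul_smul] }

/-- The Hessian bilinear form `⟨A | ∇²f(X) | B⟩` induced by the derivative
`hessOp` of the gradient map. -/
noncomputable def hform {n : ℕ}
    (hessOp : Matrix (Fin n) (Fin n) ℝ →L[ℝ] Matrix (Fin n) (Fin n) ℝ)
    (A B : Matrix (Fin n) (Fin n) ℝ) : ℝ :=
  mip A (hessOp B)

/-- `underline-f`: the minimum of `⟨G | Y − X̂⟩` over `Y ∈ F`. -/
noncomputable def underf {n : ℕ} (G Xh : Matrix (Fin n) (Fin n) ℝ) : ℝ :=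
  sInf ((fun Y => mip G (Y - Xh)) '' Feas n)

/-- First-order optimality condition at `Xs` for gradient matrix `G`. -/
def FirstOrderOpt {n : ℕ} (G Xs : Matrix (Fin n) (Fin n) ℝ) : Prop :=
  ∀ X ∈ Feas n, 0 ≤ mip G (X - Xs)

/-- A fixed eigenvalue decomposition `G = P Γ Pᵀ` of a symmetric matrix `G`,
with eigenvalues in descending order, split into the block `Pp, gp` of
positive eigenvalues and the block `Pm, gm` of nonpositive eigenvalues. -/
structure SpecDecomp (n : ℕ) (G : Matrix (Fin n) (Fin n) ℝ) where
  np : ℕ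
  nm : ℕ
  hdim : np + nm = n
  Pp : Matrix (Fin n) (Fin np) ℝ
  Pm : Matrix (Fin n) (Fin nm) ℝ
  gp : Fin np → ℝ
  gm : Fin nm → ℝ
  hgp_pos : ∀ i, 0 < gp i
  hgm_nonpos : ∀ j, gm j ≤ 0
  hgp_anti : ∀ i j : Fin np, i ≤ j → gp j ≤ gp i
  hgm_anti : ∀ i j : Fin nm, i ≤ j → gm j ≤ gm i
  hPp_orth : Ppᵀ * Pp = 1
  hPm_orth : Pmᵀ * Pm = 1
  hPpPm : Ppᵀ * Pm = 0
  hPPT : Pp * Ppᵀ + Pm * Pmᵀ = 1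
  hG : G = Pp * Matrix.diagonal gp * Ppᵀ + Pm * Matrix.diagonal gm * Pmᵀ

namespace SpecDecomp

variable {n : ℕ} {G : Matrix (Fin n) (Fin n) ℝ}

/-- `V₊(X) = P₊ᵀ X P₊`. -/
def Vp (sd : SpecDecomp n G) (X : Matrix (Fin n) (Fin n) ℝ) :
    Matrix (Fin sd.np) (Fin sd.np) ℝ :=
  sd.Ppᵀ * X * sd.Pp

/-- `V₋(X) = P₋ᵀ (I − X) P₋`. -/
def Vm (sd : SpecDecomp n G) (X : Matrix (Fin n) (Fin n) ℝ) :
    Matrix (Fin sd.nm) (Fin sd.nm) ℝ :=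
  sd.Pmᵀ * (1 - X) * sd.Pm

/-- The search direction `D(X) = P M Pᵀ` with blocks
`M₁₁ = V₊^{1/2} Γ₊ V₊^{1/2}`, `M₁₂ = γ_max P₊ᵀ X P₋`,
`M₂₁ = γ_max P₋ᵀ X P₊`, `M₂₂ = V₋^{1/2} Γ₋ V₋^{1/2}`. -/
noncomputable def Dmat (sd : SpecDecomp n G) (X : Matrix (Fin n) (Fin n) ℝ) :
    Matrix (Fin n) (Fin n) ℝ :=
  sd.Pp * (psqrt (sd.Vp X) * Matrix.diagonal sd.gp * psqrt (sd.Vp X)) * sd.Ppᵀ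
    + norm2 G • (sd.Pp * (sd.Ppᵀ * X * sd.Pm) * sd.Pmᵀ)
    + norm2 G • (sd.Pm * (sd.Pmᵀ * X * sd.Pp) * sd.Ppᵀ)
    + sd.Pm * (psqrt (sd.Vm X) * Matrix.diagonal sd.gm * psqrt (sd.Vm X)) * sd.Pmᵀ

/-- `N(X) = ⟨G | D(X)⟩`. -/
noncomputable def Nval (sd : SpecDecomp n G) (X : Matrix (Fin n) (Fin n) ℝ) : ℝ :=
  mip G (sd.Dmat X)

end SpecDecomp

section Aux

variable {m : Type*} [Fintype m] [DecidableEq m]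

lemma psd_smul {A : Matrix m m ℝ} (hA : A.PosSemidef) {c : ℝ} (hc : 0 ≤ c) :
    (c • A).PosSemidef := by
  refine ⟨?_, fun x => ?_⟩
  · unfold Matrix.IsHermitian
    rw [Matrix.conjTranspose_smul, hA.1]
    simp
  · exact (hA.smul hc).2 x

lemma psd_diag_nonneg {A : Matrix m m ℝ} (hA : A.PosSemidef) (i : m) : 0 ≤ A i i := by
  exact hA.diag_nonneg

lemma psd_mul_mul_transpose {k : Type*} [Fintype k] {A : Matrix m m ℝ}
    (hA : A.PosSemidef) (B : Matrix k m ℝ) : (B * A * Bᵀ).PosSemidef := by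
  have := hA.mul_mul_conjTranspose_same B
  rwa [Matrix.conjTranspose_eq_transpose_of_trivial] at this

lemma psd_transpose_mul_mul {k : Type*} [Fintype k] {A : Matrix m m ℝ}
    (hA : A.PosSemidef) (B : Matrix m k ℝ) : (Bᵀ * A * B).PosSemidef := by
  have := hA.conjTranspose_mul_mul_same B
  rwa [Matrix.conjTranspose_eq_transpose_of_trivial] at this

lemma psd_conj_diag {S : Matrix m m ℝ} (hS : S.IsHermitian) {d : m → ℝ}
    (hd : ∀ i, 0 ≤ d i) : (S * Matrix.diagonal d * S).PosSemidef := by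
  have := (Matrix.PosSemidef.diagonal (R := ℝ) (n := m) (d := d)
      (fun i => hd i)).conjTranspose_mul_mul_same S
  rwa [hS.eq] at this

lemma norm2_nonneg (G : Matrix m m ℝ) : 0 ≤ norm2 G := by
  unfold norm2
  split
  · exact Real.sSup_nonneg (by rintro x ⟨i, rfl⟩; exact abs_nonneg _)
  · exact le_refl 0

lemma norm2_eigen_bound {G : Matrix m m ℝ} (hG : G.IsHermitian) (i : m) :
    |hG.eigenvalues i| ≤ norm2 G := by
  unfold norm2
  rw [dif_pos hG]
  exact le_csSup ((Set.finite_range _).bddAbove) ⟨i, rfl⟩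

lemma spectral_real {G : Matrix m m ℝ} (hG : G.IsHermitian) :
    G = (hG.eigenvectorUnitary : Matrix m m ℝ) * Matrix.diagonal hG.eigenvalues
        * star (hG.eigenvectorUnitary : Matrix m m ℝ) := by
  have := hG.spectral_theorem
  simpa [RCLike.ofReal_real_eq_id] using this

lemma smul_one_sub_diagonal (c : ℝ) (d : m → ℝ) :
    c • (1 : Matrix m m ℝ) - Matrix.diagonal d = Matrix.diagonal (fun i => c - d i) := by
  ext i j
  rcases eq_or_ne i j with rfl | hij
  · simp
  · simp [Matrix.diagonal_apply_ne _ hij, Matrix.one_apply_ne hij]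

lemma smul_one_add_diagonal (c : ℝ) (d : m → ℝ) :
    c • (1 : Matrix m m ℝ) + Matrix.diagonal d = Matrix.diagonal (fun i => c + d i) := by
  ext i j
  rcases eq_or_ne i j with rfl | hij
  · simp
  · simp [Matrix.diagonal_apply_ne _ hij, Matrix.one_apply_ne hij]

lemma norm2_smul_one_sub_psd {G : Matrix m m ℝ} (hG : G.IsHermitian) :
    (norm2 G • (1 : Matrix m m ℝ) - G).PosSemidef := by
  have hU : (hG.eigenvectorUnitary : Matrix m m ℝ)
      * star (hG.eigenvectorUnitary : Matrix m m ℝ) = 1 :=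
    Matrix.mem_unitaryGroup_iff.mp hG.eigenvectorUnitary.2
  have h1 : norm2 G • (1 : Matrix m m ℝ) - G
      = (hG.eigenvectorUnitary : Matrix m m ℝ)
        * Matrix.diagonal (fun i => norm2 G - hG.eigenvalues i)
        * star (hG.eigenvectorUnitary : Matrix m m ℝ) := by
    nth_rewrite 2 [spectral_real hG]
    rw [← smul_one_sub_diagonal, Matrix.mul_sub, Matrix.sub_mul, Matrix.mul_smul,
      Matrix.smul_mul, Matrix.mul_one, hU]
  have hpsd : (Matrix.diagonal (fun i => norm2 G - hG.eigenvalues i)).PosSemidef :=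
    Matrix.PosSemidef.diagonal (fun i => sub_nonneg.mpr (abs_le.mp (norm2_eigen_bound hG i)).2)
  have := hpsd.mul_mul_conjTranspose_same (hG.eigenvectorUnitary : Matrix m m ℝ)
  rw [h1]
  simpa [Matrix.star_eq_conjTranspose] using this

lemma norm2_smul_one_add_psd {G : Matrix m m ℝ} (hG : G.IsHermitian) :
    (norm2 G • (1 : Matrix m m ℝ) + G).PosSemidef := by
  have hU : (hG.eigenvectorUnitary : Matrix m m ℝ)
      * star (hG.eigenvectorUnitary : Matrix m m ℝ) = 1 :=
    Matrix.mem_unitaryGroup_iff.mp hG.eigenvectorUnitary.2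
  have h1 : norm2 G • (1 : Matrix m m ℝ) + G
      = (hG.eigenvectorUnitary : Matrix m m ℝ)
        * Matrix.diagonal (fun i => norm2 G + hG.eigenvalues i)
        * star (hG.eigenvectorUnitary : Matrix m m ℝ) := by
    nth_rewrite 2 [spectral_real hG]
    rw [← smul_one_add_diagonal, Matrix.mul_add, Matrix.add_mul, Matrix.mul_smul,
      Matrix.smul_mul, Matrix.mul_one, hU]
  have hpsd : (Matrix.diagonal (fun i => norm2 G + hG.eigenvalues i)).PosSemidef :=
    Matrix.PosSemidef.diagonal
      (fun i => by
        have := (abs_le.mp (norm2_eigen_bound hG i)).1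
        show (0:ℝ) ≤ norm2 G + hG.eigenvalues i
        linarith)
  have := hpsd.mul_mul_conjTranspose_same (hG.eigenvectorUnitary : Matrix m m ℝ)
  rw [h1]
  simpa [Matrix.star_eq_conjTranspose] using this

lemma eq_zero_of_norm2_eq_zero {G : Matrix m m ℝ} (hG : G.IsHermitian)
    (h : norm2 G = 0) : G = 0 := by
  have heig : hG.eigenvalues = fun _ => 0 := by
    funext i
    have := norm2_eigen_bound hG i
    rw [h] at this
    exact abs_eq_zero.mp (le_antisymm this (abs_nonneg _))
  have := spectral_real hG
  rw [heig] at this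
  simpa [Matrix.diagonal_zero] using this

lemma psqrt_spec (A : Matrix m m ℝ) (h : A.PosSemidef) :
    (psqrt A).PosSemidef ∧ psqrt A * psqrt A = A := by
  unfold psqrt
  rw [dif_pos h]
  set U := (h.1.eigenvectorUnitary : Matrix m m ℝ) with hUdef
  have hU : star U * U = 1 := Matrix.mem_unitaryGroup_iff'.mp h.1.eigenvectorUnitary.2
  have hD : Matrix.diagonal ((↑) ∘ Real.sqrt ∘ h.1.eigenvalues : m → ℝ)
      * Matrix.diagonal ((↑) ∘ Real.sqrt ∘ h.1.eigenvalues : m → ℝ)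
      = Matrix.diagonal h.1.eigenvalues := by
    rw [Matrix.diagonal_mul_diagonal]
    congr 1
    funext i
    simp [Real.mul_self_sqrt (h.eigenvalues_nonneg i)]
  constructor
  · have := (Matrix.PosSemidef.diagonal (n := m) (R := ℝ)
      (d := ((↑) ∘ Real.sqrt ∘ h.1.eigenvalues : m → ℝ))
      (fun i => by simp [Real.sqrt_nonneg])).mul_mul_conjTranspose_same U
    simpa [Matrix.star_eq_conjTranspose] using this
  · calc U * Matrix.diagonal ((↑) ∘ Real.sqrt ∘ h.1.eigenvalues : m → ℝ) * star U
          * (U * Matrix.diagonal ((↑) ∘ Real.sqrt ∘ h.1.eigenvalues : m → ℝ) * star U)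
        = U * (Matrix.diagonal ((↑) ∘ Real.sqrt ∘ h.1.eigenvalues : m → ℝ)
          * Matrix.diagonal ((↑) ∘ Real.sqrt ∘ h.1.eigenvalues : m → ℝ)) * star U := by
          simp only [Matrix.mul_assoc]
          rw [← Matrix.mul_assoc (star U) U, hU, Matrix.one_mul]
      _ = A := by rw [hD, hUdef, ← spectral_real h.1]

lemma trace_diagonal_mul' (d : m → ℝ) (M : Matrix m m ℝ) :
    (Matrix.diagonal d * M).trace = ∑ i, d i * M i i := by
  simp [Matrix.trace, Matrix.diag, Matrix.diagonal_mul]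

section KeyIdentities

variable {n np nm : ℕ}

lemma key1_abstract (Pp : Matrix (Fin n) (Fin np) ℝ)
    (Pm : Matrix (Fin n) (Fin nm) ℝ) (gp : Fin np → ℝ) (gm : Fin nm → ℝ) (γ : ℝ)
    (X : Matrix (Fin n) (Fin n) ℝ) (Sp : Matrix (Fin np) (Fin np) ℝ)
    (Sm : Matrix (Fin nm) (Fin nm) ℝ)
    (A : Matrix (Fin np) (Fin np) ℝ) (B : Matrix (Fin np) (Fin nm) ℝ)
    (C : Matrix (Fin nm) (Fin np) ℝ) (W : Matrix (Fin nm) (Fin nm) ℝ)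
    (hX : X = Pp * A * Ppᵀ + Pp * B * Pmᵀ + Pm * C * Ppᵀ + Pm * W * Pmᵀ)
    (hSp2 : Sp * Sp = A) :
    γ • X - (Pp * (Sp * Matrix.diagonal gp * Sp) * Ppᵀ + γ • (Pp * B * Pmᵀ)
      + γ • (Pm * C * Ppᵀ) + Pm * (Sm * Matrix.diagonal gm * Sm) * Pmᵀ)
    = Pp * (Sp * Matrix.diagonal (fun i => γ - gp i) * Sp) * Ppᵀ
      + Pm * (γ • W + Sm * Matrix.diagonal (fun j => - gm j) * Sm) * Pmᵀ := by
  have hd : Sp * Matrix.diagonal (fun i => γ - gp i) * Sp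
      = γ • A - Sp * Matrix.diagonal gp * Sp := by
    rw [← smul_one_sub_diagonal, Matrix.mul_sub, Matrix.sub_mul, Matrix.mul_smul,
      Matrix.mul_one, Matrix.smul_mul, hSp2]
  have hn : Sm * Matrix.diagonal (fun j => - gm j) * Sm
      = - (Sm * Matrix.diagonal gm * Sm) := by
    rw [← Matrix.diagonal_neg, Matrix.mul_neg, Matrix.neg_mul]
  subst hX
  rw [hd, hn]
  simp only [Matrix.mul_add, Matrix.add_mul, Matrix.mul_sub, Matrix.sub_mul,
    Matrix.mul_smul, Matrix.smul_mul, smul_add, smul_sub, Matrix.mul_assoc,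
    Matrix.mul_neg, Matrix.neg_mul]
  abel

lemma key2_abstract (Pp : Matrix (Fin n) (Fin np) ℝ)
    (Pm : Matrix (Fin n) (Fin nm) ℝ) (gp : Fin np → ℝ) (gm : Fin nm → ℝ) (γ : ℝ)
    (X : Matrix (Fin n) (Fin n) ℝ) (Sp : Matrix (Fin np) (Fin np) ℝ)
    (Sm : Matrix (Fin nm) (Fin nm) ℝ)
    (A : Matrix (Fin np) (Fin np) ℝ) (B : Matrix (Fin np) (Fin nm) ℝ)
    (C : Matrix (Fin nm) (Fin np) ℝ) (V : Matrix (Fin nm) (Fin nm) ℝ)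
    (hX : (1 : Matrix (Fin n) (Fin n) ℝ) - X
      = Pp * A * Ppᵀ + Pp * (-B) * Pmᵀ + Pm * (-C) * Ppᵀ + Pm * V * Pmᵀ)
    (hSm2 : Sm * Sm = V) :
    γ • ((1 : Matrix (Fin n) (Fin n) ℝ) - X)
      + (Pp * (Sp * Matrix.diagonal gp * Sp) * Ppᵀ + γ • (Pp * B * Pmᵀ)
      + γ • (Pm * C * Ppᵀ) + Pm * (Sm * Matrix.diagonal gm * Sm) * Pmᵀ)
    = Pp * (γ • A + Sp * Matrix.diagonal gp * Sp) * Ppᵀ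
      + Pm * (Sm * Matrix.diagonal (fun j => γ + gm j) * Sm) * Pmᵀ := by
  have hd : Sm * Matrix.diagonal (fun j => γ + gm j) * Sm
      = γ • V + Sm * Matrix.diagonal gm * Sm := by
    rw [← smul_one_add_diagonal, Matrix.mul_add, Matrix.add_mul, Matrix.mul_smul,
      Matrix.mul_one, Matrix.smul_mul, hSm2]
  rw [hd, hX]
  simp only [Matrix.mul_add, Matrix.add_mul, Matrix.mul_sub, Matrix.sub_mul,
    Matrix.mul_smul, Matrix.smul_mul, smul_add, smul_sub, Matrix.mul_assoc,
    Matrix.mul_neg, Matrix.neg_mul, smul_neg]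
  abel

end KeyIdentities

end Aux

theorem step_along_direction_mem_Feas {n : ℕ}
    (f : Matrix (Fin n) (Fin n) ℝ → ℝ)
    (grad : Matrix (Fin n) (Fin n) ℝ → Matrix (Fin n) (Fin n) ℝ)
    (hgradsym : ∀ X ∈ Feas n, (grad X).IsSymm)
    (hgrad : ∀ X ∈ Feas n, HasFDerivAt f (gradCLM (grad X)) X)
    (X : Matrix (Fin n) (Fin n) ℝ) (hX : X ∈ Feas n)
    (sd : SpecDecomp n (grad X))
    (hnopt : ¬ FirstOrderOpt (grad X) X) :
    sd.Dmat X ≠ 0 ∧ 0 < norm2 (grad X) ∧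
      ∀ α : ℝ, 0 ≤ α → α ≤ fnorm (sd.Dmat X) / norm2 (grad X) →
        X - (α / fnorm (sd.Dmat X)) • sd.Dmat X ∈ Feas n := by
  classical
  have hXpsd := hX.1
  have hIXpsd := hX.2
  have hGsymm0 : (grad X).IsSymm := hgradsym X hX
  clear hgrad hgradsym
  revert sd hnopt hGsymm0
  generalize grad X = G
  intro sd hnopt hGsymm
  have hGherm : G.IsHermitian := by
    rw [Matrix.IsHermitian, Matrix.conjTranspose_eq_transpose_of_trivial]
    exact hGsymm
  -- orthogonality facts
  have hPmPp : sd.Pmᵀ * sd.Pp = 0 := by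
    have h := congrArg Matrix.transpose sd.hPpPm
    simpa [Matrix.transpose_mul] using h
  have e1 : ∀ {k : Type} (Z : Matrix (Fin sd.np) k ℝ), sd.Ppᵀ * (sd.Pp * Z) = Z := by
    intro k Z; rw [← Matrix.mul_assoc, sd.hPp_orth, Matrix.one_mul]
  have e2 : ∀ {k : Type} (Z : Matrix (Fin sd.nm) k ℝ), sd.Ppᵀ * (sd.Pm * Z) = 0 := by
    intro k Z; rw [← Matrix.mul_assoc, sd.hPpPm, Matrix.zero_mul]
  have e3 : ∀ {k : Type} (Z : Matrix (Fin sd.np) k ℝ), sd.Pmᵀ * (sd.Pp * Z) = 0 := by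
    intro k Z; rw [← Matrix.mul_assoc, hPmPp, Matrix.zero_mul]
  have e4 : ∀ {k : Type} (Z : Matrix (Fin sd.nm) k ℝ), sd.Pmᵀ * (sd.Pm * Z) = Z := by
    intro k Z; rw [← Matrix.mul_assoc, sd.hPm_orth, Matrix.one_mul]
  -- PSD of the blocks
  have hVp : (sd.Vp X).PosSemidef := psd_transpose_mul_mul hXpsd sd.Pp
  have hVm : (sd.Vm X).PosSemidef := psd_transpose_mul_mul hIXpsd sd.Pm
  have hW22 : (sd.Pmᵀ * X * sd.Pm).PosSemidef := psd_transpose_mul_mul hXpsd sd.Pm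
  have hIVp : (sd.Ppᵀ * (1 - X) * sd.Pp).PosSemidef := psd_transpose_mul_mul hIXpsd sd.Pp
  -- square roots
  have hSppsd : (psqrt (sd.Vp X)).PosSemidef := (psqrt_spec _ hVp).1
  have hSmpsd : (psqrt (sd.Vm X)).PosSemidef := (psqrt_spec _ hVm).1
  have hSpherm : (psqrt (sd.Vp X)).IsHermitian := hSppsd.1
  have hSmherm : (psqrt (sd.Vm X)).IsHermitian := hSmpsd.1
  have hSp2 : psqrt (sd.Vp X) * psqrt (sd.Vp X) = sd.Ppᵀ * X * sd.Pp := by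
    exact (psqrt_spec _ hVp).2
  have hSm2 : psqrt (sd.Vm X) * psqrt (sd.Vm X) = sd.Pmᵀ * (1 - X) * sd.Pm := by
    exact (psqrt_spec _ hVm).2
  -- eigenvalue bounds
  have hPpGPp : sd.Ppᵀ * G * sd.Pp = Matrix.diagonal sd.gp := by
    have h0 := congrArg (fun M => sd.Ppᵀ * M * sd.Pp) sd.hG
    simp only [Matrix.add_mul, Matrix.mul_add, Matrix.mul_assoc, sd.hPp_orth,
      sd.hPm_orth, sd.hPpPm, hPmPp, e1, e2, e3, e4, Matrix.mul_one, Matrix.mul_zero,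
      Matrix.zero_mul, add_zero, zero_add] at h0
    rw [Matrix.mul_assoc]
    exact h0
  have hPmGPm : sd.Pmᵀ * G * sd.Pm = Matrix.diagonal sd.gm := by
    have h0 := congrArg (fun M => sd.Pmᵀ * M * sd.Pm) sd.hG
    simp only [Matrix.add_mul, Matrix.mul_add, Matrix.mul_assoc, sd.hPp_orth,
      sd.hPm_orth, sd.hPpPm, hPmPp, e1, e2, e3, e4, Matrix.mul_one, Matrix.mul_zero,
      Matrix.zero_mul, add_zero, zero_add] at h0
    rw [Matrix.mul_assoc]
    exact h0
  have hgp_le : ∀ i, sd.gp i ≤ norm2 G := by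
    intro i
    have h2 := psd_transpose_mul_mul (norm2_smul_one_sub_psd hGherm) sd.Pp
    have h3 : sd.Ppᵀ * (norm2 G • 1 - G) * sd.Pp
        = Matrix.diagonal (fun i => norm2 G - sd.gp i) := by
      rw [Matrix.mul_sub, Matrix.sub_mul, Matrix.mul_smul, Matrix.mul_one,
        Matrix.smul_mul, sd.hPp_orth, hPpGPp, smul_one_sub_diagonal]
    rw [h3] at h2
    have := Matrix.posSemidef_diagonal_iff.mp h2 i
    linarith
  have hgm_ge : ∀ j, -(norm2 G) ≤ sd.gm j := by
    intro j
    have h2 := psd_transpose_mul_mul (norm2_smul_one_add_psd hGherm) sd.Pm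
    have h3 : sd.Pmᵀ * (norm2 G • 1 + G) * sd.Pm
        = Matrix.diagonal (fun j => norm2 G + sd.gm j) := by
      rw [Matrix.mul_add, Matrix.add_mul, Matrix.mul_smul, Matrix.mul_one,
        Matrix.smul_mul, sd.hPm_orth, hPmGPm, smul_one_add_diagonal]
    rw [h3] at h2
    have := Matrix.posSemidef_diagonal_iff.mp h2 j
    linarith
  -- block decomposition of arbitrary matrices
  have hdec : ∀ Z : Matrix (Fin n) (Fin n) ℝ,
      Z = sd.Pp * (sd.Ppᵀ * Z * sd.Pp) * sd.Ppᵀ + sd.Pp * (sd.Ppᵀ * Z * sd.Pm) * sd.Pmᵀ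
        + sd.Pm * (sd.Pmᵀ * Z * sd.Pp) * sd.Ppᵀ
        + sd.Pm * (sd.Pmᵀ * Z * sd.Pm) * sd.Pmᵀ := by
    intro Z
    have h : (sd.Pp * sd.Ppᵀ + sd.Pm * sd.Pmᵀ) * Z * (sd.Pp * sd.Ppᵀ + sd.Pm * sd.Pmᵀ)
        = Z := by rw [sd.hPPT, Matrix.one_mul, Matrix.mul_one]
    conv_lhs => rw [← h]
    simp only [Matrix.mul_add, Matrix.add_mul, Matrix.mul_assoc]
    abel
  have hc1 : sd.Ppᵀ * (1 - X) * sd.Pm = -(sd.Ppᵀ * X * sd.Pm) := by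
    rw [Matrix.mul_sub, Matrix.mul_one, Matrix.sub_mul, sd.hPpPm, zero_sub]
  have hc2 : sd.Pmᵀ * (1 - X) * sd.Pp = -(sd.Pmᵀ * X * sd.Pp) := by
    rw [Matrix.mul_sub, Matrix.mul_one, Matrix.sub_mul, hPmPp, zero_sub]
  have hX2 : (1 : Matrix (Fin n) (Fin n) ℝ) - X
      = sd.Pp * (sd.Ppᵀ * (1 - X) * sd.Pp) * sd.Ppᵀ
        + sd.Pp * (-(sd.Ppᵀ * X * sd.Pm)) * sd.Pmᵀ
        + sd.Pm * (-(sd.Pmᵀ * X * sd.Pp)) * sd.Ppᵀ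
        + sd.Pm * (sd.Pmᵀ * (1 - X) * sd.Pm) * sd.Pmᵀ := by
    have h := hdec (1 - X)
    rw [hc1, hc2] at h
    exact h
  -- the two key identities
  have key1 : norm2 G • X - sd.Dmat X
      = sd.Pp * (psqrt (sd.Vp X)
            * Matrix.diagonal (fun i => norm2 G - sd.gp i) * psqrt (sd.Vp X)) * sd.Ppᵀ
        + sd.Pm * (norm2 G • (sd.Pmᵀ * X * sd.Pm)
            + psqrt (sd.Vm X) * Matrix.diagonal (fun j => - sd.gm j) * psqrt (sd.Vm X)) * sd.Pmᵀ := by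
    exact key1_abstract sd.Pp sd.Pm sd.gp sd.gm (norm2 G) X
      (psqrt (sd.Vp X)) (psqrt (sd.Vm X)) _ _ _ _ (hdec X) hSp2
  have key2 : norm2 G • ((1 : Matrix (Fin n) (Fin n) ℝ) - X) + sd.Dmat X
      = sd.Pp * (norm2 G • (sd.Ppᵀ * (1 - X) * sd.Pp)
            + psqrt (sd.Vp X) * Matrix.diagonal sd.gp * psqrt (sd.Vp X)) * sd.Ppᵀ
        + sd.Pm * (psqrt (sd.Vm X)
            * Matrix.diagonal (fun j => norm2 G + sd.gm j) * psqrt (sd.Vm X)) * sd.Pmᵀ := by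
    exact key2_abstract sd.Pp sd.Pm sd.gp sd.gm (norm2 G) X
      (psqrt (sd.Vp X)) (psqrt (sd.Vm X)) _ _ _ _ hX2 hSm2
  -- trace formula
  have trace_form : ∀ Y : Matrix (Fin n) (Fin n) ℝ, (G * Y).trace
      = (∑ i, sd.gp i * (sd.Ppᵀ * Y * sd.Pp) i i)
        + (∑ j, sd.gm j * (sd.Pmᵀ * Y * sd.Pm) j j) := by
    intro Y
    nth_rewrite 1 [sd.hG]
    rw [Matrix.add_mul, Matrix.trace_add]
    congr 1
    · simp only [Matrix.mul_assoc]
      rw [Matrix.trace_mul_comm sd.Pp, Matrix.mul_assoc, trace_diagonal_mul']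
      simp [Matrix.mul_assoc]
    · simp only [Matrix.mul_assoc]
      rw [Matrix.trace_mul_comm sd.Pm, Matrix.mul_assoc, trace_diagonal_mul']
      simp [Matrix.mul_assoc]
  -- lower bound of the trace over the feasible set
  have htrY : ∀ Y ∈ Feas n, (∑ j, sd.gm j) ≤ (G * Y).trace := by
    intro Y hY
    rw [trace_form Y]
    have h1 : 0 ≤ ∑ i, sd.gp i * (sd.Ppᵀ * Y * sd.Pp) i i :=
      Finset.sum_nonneg fun i _ => mul_nonneg (sd.hgp_pos i).le
        (psd_diag_nonneg (psd_transpose_mul_mul hY.1 sd.Pp) i)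
    have h2 : (∑ j, sd.gm j) ≤ ∑ j, sd.gm j * (sd.Pmᵀ * Y * sd.Pm) j j := by
      apply Finset.sum_le_sum
      intro j _
      have hps := psd_diag_nonneg (psd_transpose_mul_mul hY.2 sd.Pm) j
      have he : sd.Pmᵀ * (1 - Y) * sd.Pm = 1 - sd.Pmᵀ * Y * sd.Pm := by
        rw [Matrix.mul_sub, Matrix.mul_one, Matrix.sub_mul, sd.hPm_orth]
      rw [he] at hps
      have hd1 : (sd.Pmᵀ * Y * sd.Pm) j j ≤ 1 := by
        have : ((1 : Matrix (Fin sd.nm) (Fin sd.nm) ℝ) - sd.Pmᵀ * Y * sd.Pm) j j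
            = 1 - (sd.Pmᵀ * Y * sd.Pm) j j := by
          simp [Matrix.sub_apply, Matrix.one_apply_eq]
        rw [this] at hps
        linarith
      nlinarith [mul_nonneg (neg_nonneg.mpr (sd.hgm_nonpos j)) (sub_nonneg.mpr hd1)]
    linarith
  -- γ_max > 0
  have hγpos : 0 < norm2 G := by
    rcases (norm2_nonneg G).lt_or_eq with h | h
    · exact h
    · exfalso
      apply hnopt
      intro Y hY
      have hG0 : G = 0 := eq_zero_of_norm2_eq_zero hGherm h.symm
      rw [mip, hG0]
      simp
  -- D(X) ≠ 0
  have hDne : sd.Dmat X ≠ 0 := by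
    intro hD0
    apply hnopt
    intro Y hY
    have hGt : Gᵀ = G := hGsymm
    have hmip : mip G (Y - X) = (G * Y).trace - (G * X).trace := by
      rw [mip, hGt, Matrix.mul_sub, Matrix.trace_sub]
    have hPpDPp : sd.Ppᵀ * sd.Dmat X * sd.Pp
        = psqrt (sd.Vp X) * Matrix.diagonal sd.gp * psqrt (sd.Vp X) := by
      unfold SpecDecomp.Dmat
      simp only [Matrix.mul_add, Matrix.add_mul, Matrix.mul_smul, Matrix.smul_mul,
        Matrix.mul_assoc, e1, e2, e3, e4, sd.hPp_orth, sd.hPm_orth, sd.hPpPm, hPmPp,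
        Matrix.mul_one, Matrix.mul_zero, Matrix.zero_mul, add_zero, zero_add, smul_zero]
    have hPmDPm : sd.Pmᵀ * sd.Dmat X * sd.Pm
        = psqrt (sd.Vm X) * Matrix.diagonal sd.gm * psqrt (sd.Vm X) := by
      unfold SpecDecomp.Dmat
      simp only [Matrix.mul_add, Matrix.add_mul, Matrix.mul_smul, Matrix.smul_mul,
        Matrix.mul_assoc, e1, e2, e3, e4, sd.hPp_orth, sd.hPm_orth, sd.hPpPm, hPmPp,
        Matrix.mul_one, Matrix.mul_zero, Matrix.zero_mul, add_zero, zero_add, smul_zero]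
    have hblock1 : psqrt (sd.Vp X) * Matrix.diagonal sd.gp * psqrt (sd.Vp X) = 0 := by
      rw [← hPpDPp, hD0, Matrix.mul_zero, Matrix.zero_mul]
    have hblock2 : psqrt (sd.Vm X) * Matrix.diagonal sd.gm * psqrt (sd.Vm X) = 0 := by
      rw [← hPmDPm, hD0, Matrix.mul_zero, Matrix.zero_mul]
    have htr1 : ∑ i, sd.gp i * (sd.Ppᵀ * X * sd.Pp) i i = 0 := by
      have h := congrArg Matrix.trace hblock1
      rw [Matrix.trace_zero, Matrix.mul_assoc, Matrix.trace_mul_comm,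
        Matrix.mul_assoc, hSp2, trace_diagonal_mul'] at h
      exact h
    have htr2 : ∑ j, sd.gm j
        * ((sd.Pmᵀ * (1 - X) * sd.Pm : Matrix (Fin sd.nm) (Fin sd.nm) ℝ)) j j = 0 := by
      have h := congrArg Matrix.trace hblock2
      rw [Matrix.trace_zero, Matrix.mul_assoc, Matrix.trace_mul_comm,
        Matrix.mul_assoc, hSm2, trace_diagonal_mul'] at h
      exact h
    have he : sd.Pmᵀ * (1 - X) * sd.Pm = 1 - sd.Pmᵀ * X * sd.Pm := by
      rw [Matrix.mul_sub, Matrix.mul_one, Matrix.sub_mul, sd.hPm_orth]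
    have htr2' : ∑ j, sd.gm j * (sd.Pmᵀ * X * sd.Pm) j j = ∑ j, sd.gm j := by
      have hterm : ∀ j, sd.gm j
          * ((sd.Pmᵀ * (1 - X) * sd.Pm : Matrix (Fin sd.nm) (Fin sd.nm) ℝ)) j j
          = sd.gm j - sd.gm j * (sd.Pmᵀ * X * sd.Pm) j j := by
        intro j
        rw [he]
        simp [Matrix.sub_apply, Matrix.one_apply_eq]
        ring
      rw [Finset.sum_congr rfl (fun j _ => hterm j), Finset.sum_sub_distrib] at htr2
      linarith
    have htrGX : (G * X).trace = ∑ j, sd.gm j := by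
      rw [trace_form X, htr1, htr2', zero_add]
    rw [hmip, htrGX]
    have := htrY Y hY
    linarith
  -- Frobenius norm positivity
  have hDF : 0 < fnorm (sd.Dmat X) := by
    rw [fnorm]
    apply Real.sqrt_pos.mpr
    have hmipDD : mip (sd.Dmat X) (sd.Dmat X)
        = ∑ j, ∑ i, sd.Dmat X i j * sd.Dmat X i j := by
      simp [mip, Matrix.trace, Matrix.diag, Matrix.mul_apply]
    rw [hmipDD]
    obtain ⟨i0, j0, hij⟩ : ∃ i j, sd.Dmat X i j ≠ 0 := by
      by_contra hc
      push_neg at hc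
      exact hDne (by ext i j; simpa using hc i j)
    refine Finset.sum_pos' (fun j _ => Finset.sum_nonneg fun i _ => mul_self_nonneg _)
      ⟨j0, Finset.mem_univ _, ?_⟩
    exact Finset.sum_pos' (fun i _ => mul_self_nonneg _)
      ⟨i0, Finset.mem_univ _, mul_self_pos.mpr hij⟩
  -- PSD of the two combination matrices
  have hA1 : (norm2 G • X - sd.Dmat X).PosSemidef := by
    rw [key1]
    refine (psd_mul_mul_transpose ?_ sd.Pp).add (psd_mul_mul_transpose ?_ sd.Pm)
    · exact psd_conj_diag hSpherm (fun i => sub_nonneg.mpr (hgp_le i))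
    · exact (psd_smul hW22 hγpos.le).add
        (psd_conj_diag hSmherm (fun j => neg_nonneg.mpr (sd.hgm_nonpos j)))
  have hA2 : (norm2 G • ((1 : Matrix (Fin n) (Fin n) ℝ) - X)
      + sd.Dmat X).PosSemidef := by
    rw [key2]
    refine (psd_mul_mul_transpose ?_ sd.Pp).add (psd_mul_mul_transpose ?_ sd.Pm)
    · exact (psd_smul hIVp hγpos.le).add
        (psd_conj_diag hSpherm (fun i => (sd.hgp_pos i).le))
    · exact psd_conj_diag hSmherm (fun j => by linarith [hgm_ge j])
  refine ⟨hDne, hγpos, ?_⟩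
  intro α hα0 hα1
  have ht0 : 0 ≤ α / fnorm (sd.Dmat X) := div_nonneg hα0 hDF.le
  have ht1 : (α / fnorm (sd.Dmat X)) * norm2 G ≤ 1 := by
    rw [div_mul_eq_mul_div, div_le_one hDF]
    exact (le_div_iff₀ hγpos).mp hα1
  refine ⟨?_, ?_⟩
  · have e : X - (α / fnorm (sd.Dmat X)) • sd.Dmat X
        = (1 - (α / fnorm (sd.Dmat X)) * norm2 G) • X
          + (α / fnorm (sd.Dmat X)) • (norm2 G • X - sd.Dmat X) := by
      module
    rw [e]
    exact (psd_smul hXpsd (by linarith)).add (psd_smul hA1 ht0)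
  · have e : 1 - (X - (α / fnorm (sd.Dmat X)) • sd.Dmat X)
        = (1 - (α / fnorm (sd.Dmat X)) * norm2 G) • (1 - X)
          + (α / fnorm (sd.Dmat X)) • (norm2 G • (1 - X) + sd.Dmat X) := by
      module
    rw [e]
    exact (psd_smul hIXpsd (by linarith)).add (psd_smul hA2 ht0)

end BoxSDP
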